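/- Let X be a simple graph on n vertices. The girth of FS(X, Star_n) is infinite (FS(X, Star_n) is acyclic) if and only if the girth of X is infinite (X is acyclic). -/

import Mathlib

open SimpleGraph

/-- The friends-and-strangers graph `FS X Y`: its vertices are the bijections from `V(X)`
to `V(Y)`, with `σ, τ` adjacent iff they differ by a swap along an edge of `X` whose
images under `σ` form an edge of `Y`. -/
def FS {V W : Type*} (X : SimpleGraph V) (Y : SimpleGraph W) : SimpleGraph (V ≃ W) where
  Adj σ τ := ∃ a b : V, X.Adj a b ∧ Y.Adj (σ a) (σ b) ∧ τ a = σ b ∧ τ b = σ a ∧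
      ∀ c : V, c ≠ a → c ≠ b → τ c = σ c
  symm := ⟨by
    rintro σ τ ⟨a, b, hX, hY, h1, h2, h3⟩
    refine ⟨a, b, hX, ?_, h2.symm, h1.symm, fun c hca hcb => (h3 c hca hcb).symm⟩
    rw [h1, h2]; exact hY.symm⟩
  loopless := ⟨by
    rintro σ ⟨a, b, hX, hY, h1, h2, h3⟩
    exact hY.ne h1⟩

/-- The star graph on `Fin n`: the vertex with value `n - 1` (playing the role of the
vertex `n` of `{1, …, n}`) is adjacent to all other vertices, and there are no
other edges. -/
def starGraph' (n : ℕ) : SimpleGraph (Fin n) where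
  Adj a b := a ≠ b ∧ (a.val = n - 1 ∨ b.val = n - 1)
  symm := ⟨by rintro a b ⟨h1, h2⟩; exact ⟨h1.symm, h2.symm⟩⟩
  loopless := ⟨by rintro a ⟨h, _⟩; exact h rfl⟩

open Walk

/-! ### Reduced walks -/

section Red
variable {V : Type*} {G : SimpleGraph V}

/-- A walk is *reduced* if it never immediately backtracks. -/
def IsRed {u v : V} (w : G.Walk u v) : Prop :=
  List.IsChain (fun d e => e.snd ≠ d.fst) w.darts

/-- In an acyclic graph, every reduced walk is a path. -/
theorem isPath_of_isRed (hG : G.IsAcyclic) {u v : V} (w : G.Walk u v) (hr : IsRed w) :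
    w.IsPath := by
  classical
  induction w with
  | nil => exact IsPath.nil
  | @cons u b v h w' ih =>
    have hr' : IsRed w' := List.IsChain.tail hr
    have hp' : w'.IsPath := ih hr'
    rw [cons_isPath_iff]
    refine ⟨hp', fun hu => ?_⟩
    have hspec := w'.take_spec hu
    set q := w'.takeUntil u hu with hq
    have hqp : q.IsPath := hp'.takeUntil hu
    cases hq2 : q with
    | nil =>
      exact h.ne (by simpa using congrArg (fun (p : G.Walk b u) => p.length) hq2 ▸ rfl)
    | @cons _ x _ h'' q'' =>
      have hdarts : w'.darts = ⟨(b, x), h''⟩ :: (q''.darts ++ (w'.dropUntil u hu).darts) := by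
        conv_lhs => rw [← hspec]
        rw [darts_append, hq2]
        simp
      have hchain : IsRed (Walk.cons h w') := hr
      unfold IsRed at hchain
      rw [darts_cons, hdarts, List.isChain_cons_cons] at hchain
      have hxu : x ≠ u := hchain.1
      have hcyc : (Walk.cons h q).IsCycle := by
        rw [cons_isCycle_iff]
        refine ⟨hqp, fun he => ?_⟩
        rw [hq2, edges_cons, List.mem_cons] at he
        rcases he with he | he
        · rw [Sym2.eq_iff] at he
          rcases he with ⟨h1, h2⟩ | ⟨h1, h2⟩
          · exact h.ne h1
          · exact hxu h1.symm
        · have hb : b ∈ q''.support := Walk.snd_mem_support_of_mem_edges q'' he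
          have : q.support.Nodup := hqp.support_nodup
          rw [hq2, support_cons, List.nodup_cons] at this
          exact this.1 hb
      exact hG _ hcyc

lemma chain'_edge_ne {u : V} {c : G.Walk u u} (hc : c.IsCycle) :
    List.IsChain (fun d e : G.Dart => d.edge ≠ e.edge) c.darts := by
  have h := hc.isCircuit.isTrail.edges_nodup
  rw [Walk.edges] at h
  exact (List.isChain_map Dart.edge).mp h.isChain

/-- Every cycle is reduced. -/
lemma isRed_of_isCycle {u : V} {c : G.Walk u u} (hc : c.IsCycle) : IsRed c := by
  unfold IsRed
  have hA := c.isChain_dartAdj_darts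
  have hE := chain'_edge_ne hc
  rw [List.isChain_iff_getElem] at hA hE ⊢
  intro i hi
  have hA' : (c.darts[i]).snd = (c.darts[i + 1]).fst := hA i hi
  intro heq
  apply hE i hi
  set d := c.darts[i]
  set e := c.darts[i + 1]
  have hd2 : d.edge = s(d.fst, d.snd) := rfl
  have he2 : e.edge = s(e.fst, e.snd) := rfl
  rw [hd2, he2, heq, ← hA']
  exact Sym2.eq_swap

lemma head_ne_getLast_of_nodup {α : Type*} {l : List α} (hn : l.Nodup) (h2 : 2 ≤ l.length)
    (h : l ≠ []) : l.head h ≠ l.getLast h := by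
  rw [List.head_eq_getElem, List.getLast_eq_getElem]
  intro he
  have := hn.getElem_inj_iff.mp he
  omega

/-- The non-backtracking condition at the junction of a cycle with itself. -/
lemma cycle_junction {u : V} {c : G.Walk u u} (hc : c.IsCycle) (hne : c.darts ≠ []) :
    (c.darts.head hne).snd ≠ (c.darts.getLast hne).fst := by
  intro h
  have h1 : (c.darts.head hne).fst = u := by simp [Walk.head_darts_eq_firstDart]
  have h2 : (c.darts.getLast hne).snd = u := by simp [Walk.getLast_darts_eq_lastDart]
  have hnodup := hc.isCircuit.isTrail.edges_nodup
  have hlen3 := hc.three_le_length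
  have hlen : 2 ≤ c.edges.length := by rw [Walk.length_edges]; omega
  have hEne : c.edges ≠ [] := by
    intro hh; rw [hh] at hlen; simp at hlen
  apply head_ne_getLast_of_nodup hnodup hlen hEne
  have hd : c.edges.head hEne = (c.darts.head hne).edge := List.head_map _
  have hl : c.edges.getLast hEne = (c.darts.getLast hne).edge := List.getLast_map _
  rw [hd, hl]
  have hd2 : (c.darts.head hne).edge = s((c.darts.head hne).fst, (c.darts.head hne).snd) := rfl
  have hl2 : (c.darts.getLast hne).edge =
      s((c.darts.getLast hne).fst, (c.darts.getLast hne).snd) := rfl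
  rw [hd2, hl2, h1, h2, h]
  exact Sym2.eq_swap

lemma chain'_flatten_replicate {α : Type*} {R : α → α → Prop} {L : List α}
    (hL : List.IsChain R L) (hne : L ≠ []) (hj : R (L.getLast hne) (L.head hne)) :
    ∀ j, List.IsChain R (List.replicate j L).flatten
  | 0 => by simp
  | (j + 1) => by
    rw [List.replicate_succ, List.flatten_cons, List.isChain_append]
    refine ⟨hL, chain'_flatten_replicate hL hne hj j, ?_⟩
    intro x hx y hy
    cases j with
    | zero => simp at hy
    | succ j' =>
      rw [List.replicate_succ, List.flatten_cons, List.head?_append_of_ne_nil _ hne,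
        List.head?_eq_head hne] at hy
      rw [List.getLast?_eq_getLast hne] at hx
      have hx' : x = L.getLast hne := by
        rw [Option.mem_some_iff] at hx; exact hx.symm
      have hy' : y = L.head hne := by
        rw [Option.mem_some_iff] at hy; exact hy.symm
      rw [hx', hy']
      exact hj

end Red

/-! ### The hole homomorphism -/

section Hole
variable {V : Type*} [DecidableEq V] {n : ℕ}

def center (hn : 0 < n) : Fin n := ⟨n - 1, by omega⟩

def hole (hn : 0 < n) (σ : V ≃ Fin n) : V := σ.symm (center hn)

lemma adj_hole_aux {X : SimpleGraph V} {σ τ : V ≃ Fin n} (hn : 0 < n) {a b : V}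
    (hX : X.Adj a b) (ha : σ a = center hn) (h1 : τ a = σ b) (h2 : τ b = σ a)
    (h3 : ∀ c, c ≠ a → c ≠ b → τ c = σ c) :
    X.Adj (hole hn σ) (hole hn τ) ∧ ∀ x, τ x = σ (Equiv.swap (hole hn σ) (hole hn τ) x) := by
  have hsa : hole hn σ = a := by rw [hole, ← ha, Equiv.symm_apply_apply]
  have htb : hole hn τ = b := by rw [hole, ← ha, ← h2, Equiv.symm_apply_apply]
  constructor
  · rw [hsa, htb]; exact hX
  · intro x
    rw [hsa, htb]
    rcases eq_or_ne x a with rfl | hxa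
    · rw [Equiv.swap_apply_left, h1]
    rcases eq_or_ne x b with rfl | hxb
    · rw [Equiv.swap_apply_right, h2]
    · rw [Equiv.swap_apply_of_ne_of_ne hxa hxb, h3 x hxa hxb]

lemma adj_hole {X : SimpleGraph V} {σ τ : V ≃ Fin n} (hn : 0 < n)
    (h : (FS X (starGraph' n)).Adj σ τ) :
    X.Adj (hole hn σ) (hole hn τ) ∧ ∀ x, τ x = σ (Equiv.swap (hole hn σ) (hole hn τ) x) := by
  obtain ⟨a, b, hX, ⟨hne, hor⟩, h1, h2, h3⟩ := h
  rcases hor with hv | hv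
  · exact adj_hole_aux hn hX (Fin.ext hv) h1 h2 h3
  · exact adj_hole_aux hn hX.symm (Fin.ext hv) h2 h1
      (fun c hcb hca => h3 c hca hcb)

def holeHom (hn : 0 < n) (X : SimpleGraph V) : FS X (starGraph' n) →g X :=
  ⟨hole hn, fun h => (adj_hole hn h).1⟩

lemma dart_eq_of_hole_eq {X : SimpleGraph V} (hn : 0 < n)
    {d e : (FS X (starGraph' n)).Dart} (hde : d.snd = e.fst)
    (hh : hole hn e.snd = hole hn d.fst) : e.snd = d.fst := by
  have hd := adj_hole hn d.adj
  have he := adj_hole hn e.adj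
  have hfst : hole hn e.fst = hole hn d.snd := by rw [hde]
  apply Equiv.ext
  intro x
  rw [he.2 x, hh, hfst, ← hde, hd.2, Equiv.swap_comm, Equiv.swap_apply_self]

lemma isRed_map_holeHom {X : SimpleGraph V} (hn : 0 < n) {σ : V ≃ Fin n}
    {c : (FS X (starGraph' n)).Walk σ σ} (hc : c.IsCycle) :
    IsRed (c.map (holeHom hn X)) := by
  classical
  unfold IsRed
  rw [Walk.darts_map, List.isChain_map]
  have hA := c.isChain_dartAdj_darts
  have hE := chain'_edge_ne hc
  rw [List.isChain_iff_getElem] at hA hE ⊢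
  intro i hi
  have hA' := hA i hi
  have hE' := hE i hi
  set d := c.darts[i]
  set e := c.darts[i + 1]
  simp only [Hom.mapDart_apply]
  intro hh
  have hA'' : d.snd = e.fst := hA'
  have heq : e.snd = d.fst := dart_eq_of_hole_eq hn hA'' (by simpa [holeHom, hole] using hh)
  apply hE'
  have he2 : e.edge = s(e.fst, e.snd) := rfl
  have hd2 : d.edge = s(d.fst, d.snd) := rfl
  rw [he2, hd2, heq, ← hA'']
  exact Sym2.eq_swap

/-- If `X` is acyclic then so is `FS X (starGraph' n)`. -/
theorem fs_acyclic {V : Type} [DecidableEq V] [Fintype V] {n : ℕ}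
    (hV : Fintype.card V = n) {X : SimpleGraph V} (hX : X.IsAcyclic) :
    (FS X (starGraph' n)).IsAcyclic := by
  intro σ c hc
  have h3 := hc.three_le_length
  have hn : 0 < n := by
    subst hV
    cases c with
    | nil => simp at h3
    | cons h c' =>
      obtain ⟨a, -⟩ := h
      exact Fintype.card_pos_iff.mpr ⟨a⟩
  have hred := isRed_map_holeHom hn hc
  have hpath := isPath_of_isRed hX _ hred
  rw [isPath_iff_eq_nil] at hpath
  have hl := congrArg Walk.length hpath
  rw [Walk.length_map] at hl
  simp only [Walk.length_nil] at hl
  omega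

end Hole

/-! ### Lifting walks of the hole -/

section Lift
variable {V : Type*} [DecidableEq V] {n : ℕ} {X : SimpleGraph V}

def walkPerm : {u v : V} → X.Walk u v → Equiv.Perm V
  | _, _, .nil => Equiv.refl V
  | _, _, @Walk.cons _ _ u b _ h p => (walkPerm p).trans (Equiv.swap u b)

lemma walkPerm_end : ∀ {u v : V} (p : X.Walk u v), walkPerm p v = u
  | _, _, .nil => rfl
  | _, _, @Walk.cons _ _ u b v h p => by
    simp [walkPerm, Equiv.trans_apply, walkPerm_end p, Equiv.swap_apply_right]

lemma fs_step (hn : 0 < n) {u w : V} (σ : V ≃ Fin n) (h : X.Adj u w)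
    (hσ : hole hn σ = u) :
    (FS X (starGraph' n)).Adj σ ((Equiv.swap u w).trans σ) := by
  have hc : σ u = center hn := by rw [← hσ, hole, Equiv.apply_symm_apply]
  refine ⟨u, w, h, ⟨fun he => h.ne (σ.injective he), Or.inl (by rw [hc]; rfl)⟩, ?_, ?_, ?_⟩
  · simp [Equiv.trans_apply]
  · simp [Equiv.trans_apply]
  · intro c hcu hcw
    simp [Equiv.trans_apply, Equiv.swap_apply_of_ne_of_ne hcu hcw]

lemma hole_step (hn : 0 < n) {u w : V} (σ : V ≃ Fin n) (hσ : hole hn σ = u) :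
    hole hn ((Equiv.swap u w).trans σ) = w := by
  rw [hole, Equiv.symm_apply_eq, Equiv.trans_apply, Equiv.swap_apply_right, ← hσ, hole,
    Equiv.apply_symm_apply]

def liftWalk (hn : 0 < n) :
    {u v : V} → (p : X.Walk u v) → (σ : V ≃ Fin n) → hole hn σ = u →
      (FS X (starGraph' n)).Walk σ ((walkPerm p).trans σ)
  | _, _, .nil, σ, _ => Walk.nil.copy rfl (by simp [walkPerm])
  | _, _, @Walk.cons _ _ u b v h p, σ, hσ =>
    (Walk.cons (fs_step hn σ h hσ)
      (liftWalk hn p ((Equiv.swap u b).trans σ) (hole_step hn σ hσ))).copy rfl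
      (by simp [walkPerm, Equiv.trans_assoc])

lemma length_liftWalk (hn : 0 < n) :
    ∀ {u v : V} (p : X.Walk u v) (σ : V ≃ Fin n) (hσ : hole hn σ = u),
      (liftWalk hn p σ hσ).length = p.length
  | _, _, .nil, σ, _ => by simp [liftWalk]
  | _, _, @Walk.cons _ _ u b v h p, σ, hσ => by
    simp [liftWalk, length_liftWalk hn p]

lemma darts_map_liftWalk (hn : 0 < n) :
    ∀ {u v : V} (p : X.Walk u v) (σ : V ≃ Fin n) (hσ : hole hn σ = u),
      (liftWalk hn p σ hσ).darts.map (fun d => (hole hn d.fst, hole hn d.snd))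
        = p.darts.map Dart.toProd
  | _, _, .nil, σ, _ => by simp [liftWalk]
  | _, _, @Walk.cons _ _ u b v h p, σ, hσ => by
    simp only [liftWalk, Walk.darts_copy, Walk.darts_cons, List.map_cons,
      darts_map_liftWalk hn p]
    congr 1
    simp [hσ, hole_step hn σ hσ]

lemma walkPerm_pow_fix {v : V} (c : X.Walk v v) (j : ℕ) : ((walkPerm c) ^ j) v = v := by
  induction j with
  | zero => simp
  | succ j ih => rw [pow_succ, Equiv.Perm.mul_apply, walkPerm_end c, ih]

lemma hole_pow (hn : 0 < n) {v : V} (c : X.Walk v v) (σ0 : V ≃ Fin n)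
    (hσ0 : hole hn σ0 = v) (j : ℕ) :
    hole hn (((walkPerm c) ^ j).trans σ0) = v := by
  rw [hole, Equiv.symm_apply_eq, Equiv.trans_apply, walkPerm_pow_fix, ← hσ0, hole,
    Equiv.apply_symm_apply]

def iterLift (hn : 0 < n) {v : V} (c : X.Walk v v) (σ0 : V ≃ Fin n)
    (hσ0 : hole hn σ0 = v) :
    (j : ℕ) → (FS X (starGraph' n)).Walk σ0 (((walkPerm c) ^ j).trans σ0)
  | 0 => Walk.nil.copy rfl (by apply Equiv.ext; intro x; simp)
  | (j + 1) =>
    ((iterLift hn c σ0 hσ0 j).append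
      (liftWalk hn c (((walkPerm c) ^ j).trans σ0) (hole_pow hn c σ0 hσ0 j))).copy rfl
      (by apply Equiv.ext; intro x; simp [Equiv.trans_apply, pow_succ, Equiv.Perm.mul_apply])

lemma length_iterLift (hn : 0 < n) {v : V} (c : X.Walk v v) (σ0 : V ≃ Fin n)
    (hσ0 : hole hn σ0 = v) (j : ℕ) :
    (iterLift hn c σ0 hσ0 j).length = j * c.length := by
  induction j with
  | zero => simp [iterLift]
  | succ j ih =>
    simp [iterLift, Walk.length_copy, Walk.length_append, ih, length_liftWalk hn c]
    ring

lemma darts_map_iterLift (hn : 0 < n) {v : V} (c : X.Walk v v) (σ0 : V ≃ Fin n)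
    (hσ0 : hole hn σ0 = v) (j : ℕ) :
    (iterLift hn c σ0 hσ0 j).darts.map (fun d => (hole hn d.fst, hole hn d.snd))
      = (List.replicate j (c.darts.map Dart.toProd)).flatten := by
  induction j with
  | zero => simp [iterLift]
  | succ j ih =>
    rw [List.replicate_succ', List.flatten_append]
    simp only [iterLift, Walk.darts_copy, Walk.darts_append, List.map_append, ih,
      darts_map_liftWalk hn c]
    simp

/-- If `X` has a cycle, then `FS X (starGraph' n)` is not acyclic. -/
theorem x_cycle_not_fs_acyclic {V : Type} [DecidableEq V] [Fintype V] {n : ℕ}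
    (hV : Fintype.card V = n) {X : SimpleGraph V} {v : V} {c : X.Walk v v}
    (hc : c.IsCycle) : ¬ (FS X (starGraph' n)).IsAcyclic := by
  intro hFS
  have hn : 0 < n := hV ▸ Fintype.card_pos_iff.mpr ⟨v⟩
  set e : V ≃ Fin n := Fintype.equivFinOfCardEq hV with he
  set σ0 : V ≃ Fin n := (Equiv.swap v (e.symm (center hn))).trans e with hσ0def
  have hσ0 : hole hn σ0 = v := by
    rw [hole, Equiv.symm_apply_eq, hσ0def, Equiv.trans_apply, Equiv.swap_apply_left,
      Equiv.apply_symm_apply]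
  set ρ := walkPerm c with hρ
  set m := orderOf ρ with hm
  have hmpos : 0 < m := orderOf_pos ρ
  have h3 := hc.three_le_length
  let W : (FS X (starGraph' n)).Walk σ0 σ0 :=
    (iterLift hn c σ0 hσ0 m).copy rfl
      (by rw [hm, pow_orderOf_eq_one]; apply Equiv.ext; intro x; simp)
  -- `W` is reduced
  have hdne : c.darts ≠ [] := by
    intro hnil
    have := congrArg List.length hnil
    rw [Walk.length_darts] at this
    simp only [List.length_nil] at this
    omega
  have hLne : c.darts.map Dart.toProd ≠ [] := by simpa using hdne
  have hL : List.IsChain (fun a b : V × V => b.2 ≠ a.1) (c.darts.map Dart.toProd) := by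
    rw [List.isChain_map]
    exact isRed_of_isCycle hc
  have hjunc : (fun a b : V × V => b.2 ≠ a.1)
      ((c.darts.map Dart.toProd).getLast hLne) ((c.darts.map Dart.toProd).head hLne) := by
    have h1 : (c.darts.map Dart.toProd).head hLne = (c.darts.head hdne).toProd :=
      List.head_map _
    have h2 : (c.darts.map Dart.toProd).getLast hLne = (c.darts.getLast hdne).toProd :=
      List.getLast_map _
    rw [h1, h2]
    exact cycle_junction hc hdne
  have hred : IsRed W := by
    unfold IsRed
    have key : W.darts.map (fun d => (hole hn d.fst, hole hn d.snd))
        = (List.replicate m (c.darts.map Dart.toProd)).flatten := by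
      show ((iterLift hn c σ0 hσ0 m).copy rfl _).darts.map _ = _
      rw [Walk.darts_copy]
      exact darts_map_iterLift hn c σ0 hσ0 m
    have hch : List.IsChain (fun a b : V × V => b.2 ≠ a.1)
        (W.darts.map (fun d => (hole hn d.fst, hole hn d.snd))) := by
      rw [key]
      exact chain'_flatten_replicate hL hLne hjunc m
    rw [List.isChain_map] at hch
    exact hch.imp (fun {d e} hR heq => hR (by rw [heq]))
  have hpath := isPath_of_isRed hFS W hred
  rw [isPath_iff_eq_nil] at hpath
  have hlen : W.length = m * c.length := by
    show ((iterLift hn c σ0 hσ0 m).copy rfl _).length = _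
    rw [Walk.length_copy]
    exact length_iterLift hn c σ0 hσ0 m
  rw [hpath] at hlen
  simp only [Walk.length_nil] at hlen
  have : 0 < m * c.length := Nat.mul_pos hmpos (by omega)
  omega

end Lift

/-- `FS(X, Star_n)` is acyclic (has infinite girth) iff `X` is acyclic (has infinite
girth). -/
theorem stmt12 {V : Type} [Fintype V] (n : ℕ) (hV : Fintype.card V = n)
    (X : SimpleGraph V) :
    (FS X (starGraph' n)).egirth = ⊤ ↔ X.egirth = ⊤ := by
  classical
  rw [egirth_eq_top, egirth_eq_top]
  constructor
  · intro hFS v c hc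
    exact x_cycle_not_fs_acyclic hV hc hFS
  · intro hX
    exact fs_acyclic hV hX
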